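/- For any cardinals κ and λ, the partially ordered set of subsets of κ of cardinality less than λ, ordered by inclusion, can be partitioned into at most 2^{<λ} many antichains; in particular it is 2^{<λ}-Noetherian. -/

import Mathlib

universe u
noncomputable section
open Cardinal Set Ordinal
open scoped Classical

namespace APf

variable {X : Type u} (r : X → X → Prop) [IsWellOrder X r]

def j (x : X) : Ordinal.{u} := typein r x

def otp (s : Set X) : Ordinal.{u} := type (Subrel r (· ∈ s))

def sig (s : Set X) : Ordinal.{u} := sSup (j r '' s)

def ssup (s : Set X) : Ordinal.{u} := sSup ((fun x => j r x + 1) '' s)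

lemma j_lt_j {x y : X} : j r x < j r y ↔ r x y := typein_lt_typein r

lemma j_inj : Function.Injective (j r) := typein_injective r

lemma bddj (s : Set X) : BddAbove (j r '' s) :=
  ⟨type r, by rintro _ ⟨x, _, rfl⟩; exact (typein_lt_type r x).le⟩

lemma bddj' (s : Set X) : BddAbove ((fun x => j r x + 1) '' s) :=
  ⟨type r + 1, by rintro _ ⟨x, _, rfl⟩
                  exact add_le_add_left (typein_lt_type r x).le 1⟩

lemma le_sig {s : Set X} {x : X} (hx : x ∈ s) : j r x ≤ sig r s :=
  le_csSup (bddj r s) (mem_image_of_mem _ hx)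

lemma sig_le {s : Set X} (hs : s.Nonempty) {b : Ordinal} (h : ∀ x ∈ s, j r x ≤ b) :
    sig r s ≤ b := csSup_le (hs.image _) (by rintro _ ⟨x, hx, rfl⟩; exact h x hx)

lemma lt_ssup {s : Set X} {x : X} (hx : x ∈ s) : j r x < ssup r s :=
  lt_of_lt_of_le (lt_add_one _) (le_csSup (bddj' r s) (mem_image_of_mem _ hx))

lemma ssup_le {s : Set X} (hs : s.Nonempty) {b : Ordinal} (h : ∀ x ∈ s, j r x + 1 ≤ b) :
    ssup r s ≤ b := csSup_le (hs.image _) (by rintro _ ⟨x, hx, rfl⟩; exact h x hx)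

lemma ssup_empty : ssup r (∅ : Set X) = 0 := by
  simp [ssup]

lemma ssup_pos {s : Set X} (hs : s.Nonempty) : 0 < ssup r s := by
  obtain ⟨x, hx⟩ := hs
  exact lt_of_le_of_lt zero_le (lt_ssup r hx)

/-- order type is monotone under inclusion -/
lemma otp_mono {s t : Set X} (h : s ⊆ t) : otp r s ≤ otp r t := by
  rw [otp, otp, type_le_iff']
  exact ⟨⟨Set.embeddingOfSubset s t h, Iff.rfl⟩⟩

/-- if everything in `s` lies strictly below `y ∈ t`, then `otp s < otp t`. -/
lemma otp_lt {s t : Set X} (hst : s ⊆ t) {y : X} (hy : y ∈ t) (h : ∀ x ∈ s, r x y) :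
    otp r s < otp r t := by
  have h1 : otp r s ≤ typein (Subrel r (· ∈ t)) ⟨y, hy⟩ := by
    rw [otp, ← type_subrel, type_le_iff']
    refine ⟨⟨⟨fun x => ⟨⟨x.1, hst x.2⟩, h x.1 x.2⟩, fun a b hab => ?_⟩, Iff.rfl⟩⟩
    exact Subtype.ext (congrArg (fun z => z.1.1) hab)
  exact lt_of_le_of_lt h1 (typein_lt_type _ _)

lemma sig_eq_of_otp {s t : Set X} (hst : s ⊆ t) (hne : s.Nonempty)
    (hotp : otp r s = otp r t) : sig r s = sig r t := by
  have hle : sig r s ≤ sig r t := sig_le r hne (fun x hx => le_sig r (hst hx))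
  rcases hle.lt_or_eq with hlt | he
  · exfalso
    obtain ⟨_, ⟨y, hy, rfl⟩, hylt⟩ := exists_lt_of_lt_csSup ((hne.mono hst).image _) hlt
    have : otp r s < otp r t := by
      refine otp_lt r hst hy (fun x hx => ?_)
      exact (j_lt_j r).1 (lt_of_le_of_lt (le_sig r hx) hylt)
    exact absurd hotp this.ne
  · exact he

section limfacts

variable {s : Set X} (hne : s ≠ ∅) (hnm : sig r s ∉ j r '' s)

include hne hnm

omit hne in
lemma j_lt_sig {x : X} (hx : x ∈ s) : j r x < sig r s :=
  lt_of_le_of_ne (le_sig r hx) (fun h => hnm (h ▸ mem_image_of_mem _ hx))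

lemma sig_lim_step {a : Ordinal} (ha : a < sig r s) : a + 1 < sig r s := by
  obtain ⟨_, ⟨x, hx, rfl⟩, hlt⟩ :=
    exists_lt_of_lt_csSup ((nonempty_iff_ne_empty.2 hne).image _) ha
  exact lt_of_le_of_lt (Order.add_one_le_of_lt hlt) (j_lt_sig r hnm hx)

lemma ssup_eq_sig : ssup r s = sig r s := by
  have h1 : ssup r s ≤ sig r s := by
    refine ssup_le r (nonempty_iff_ne_empty.2 hne) (fun x hx => ?_)
    exact (sig_lim_step r hne hnm (j_lt_sig r hnm hx)).le
  refine le_antisymm h1 (sig_le r (nonempty_iff_ne_empty.2 hne) (fun x hx => ?_))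
  exact (lt_ssup r hx).le

lemma sig_pos : 0 < sig r s := by
  obtain ⟨x, hx⟩ := nonempty_iff_ne_empty.2 hne
  exact lt_of_le_of_lt zero_le (j_lt_sig r hnm hx)

/-- cofinality bound in the no-max case -/
lemma cof_sig_le : (sig r s).cof ≤ #s := by
  have hlsub : lsub.{u,u} (fun x : s => j r x.1) = sig r s := by
    apply le_antisymm
    · exact lsub_le (fun x => j_lt_sig r hnm x.2)
    · refine sig_le r (nonempty_iff_ne_empty.2 hne) (fun x hx => ?_)
      exact (lt_lsub (fun x : s => j r x.1) ⟨x, hx⟩).le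
  calc (sig r s).cof = (lsub.{u,u} fun x : s => j r x.1).cof := by rw [hlsub]
    _ ≤ #s := cof_lsub_le _

end limfacts

section maxfacts

variable {s : Set X} {m : X} (hm : m ∈ s) (hjm : j r m = sig r s)

include hm hjm

lemma ssup_eq_max : ssup r s = sig r s + 1 := by
  apply le_antisymm
  · refine ssup_le r ⟨m, hm⟩ (fun x hx => add_le_add_left (le_sig r hx) 1)
  · rw [← hjm]
    exact le_csSup (bddj' r s) (mem_image_of_mem _ hm)

lemma ssup_max_child_lt : ssup r {x ∈ s | j r x ≠ sig r s} < ssup r s := by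
  rw [ssup_eq_max r hm hjm]
  rcases eq_empty_or_nonempty {x ∈ s | j r x ≠ sig r s} with he | hne
  · rw [he, ssup_empty]
    exact lt_of_le_of_lt zero_le (lt_add_one _)
  · refine lt_of_le_of_lt (ssup_le r hne (fun x hx => ?_)) (lt_add_one _)
    have := lt_of_le_of_ne (le_sig r hx.1) hx.2
    exact Order.add_one_le_of_lt this

end maxfacts

/-- existence of a cofinal "ladder" function indexed by small ordinals -/
lemma exists_lad (o : Ordinal.{u}) (ho : o ≠ 0) :
    ∃ g : Ordinal.{u} → Ordinal.{u},
      (∀ i, g i < o) ∧ ∀ β < o, ∃ i < o.cof.ord, β ≤ g i := by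
  obtain ⟨ι, f, hf, hι⟩ := exists_lsub_cof o
  have hmk : #ι = #(o.cof.ord.ToType) := by rw [mk_toType, card_ord, hι]
  obtain ⟨e⟩ := Cardinal.eq.1 hmk
  have h0 : (0 : Ordinal) < o.cof.ord := by
    rw [← Cardinal.ord_zero]
    exact Cardinal.ord_lt_ord.2 (pos_iff_ne_zero.2 (fun h => ho (cof_eq_zero.1 h)))
  refine ⟨fun i => if h : i < o.cof.ord then f (e.symm (ToType.mk ⟨i, h⟩)) else
    f (e.symm (ToType.mk ⟨0, h0⟩)), fun i => ?_, fun β hβ => ?_⟩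
  · dsimp only
    split <;> · exact lt_of_lt_of_le (lt_lsub _ _) hf.le
  · rw [← hf] at hβ
    obtain ⟨k, hk⟩ := lt_lsub_iff.1 hβ
    refine ⟨((ToType.mk (o := o.cof.ord)).symm (e k)).1,
      ((ToType.mk (o := o.cof.ord)).symm (e k)).2, ?_⟩
    dsimp only
    rw [dif_pos (show ((ToType.mk (o := o.cof.ord)).symm (e k)).1 < o.cof.ord from ((ToType.mk (o := o.cof.ord)).symm (e k)).2)]
    rwa [Subtype.coe_eta, OrderIso.apply_symm_apply, Equiv.symm_apply_apply]

/-- a fixed choice of ladder for each ordinal -/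
def lad (o : Ordinal.{u}) : Ordinal.{u} → Ordinal.{u} :=
  if h : o ≠ 0 then Classical.choose (exists_lad o h) else fun _ => 0

lemma lad_lt {o : Ordinal.{u}} (ho : o ≠ 0) (i : Ordinal) : lad o i < o := by
  rw [lad, dif_pos ho]
  exact (Classical.choose_spec (exists_lad o ho)).1 i

lemma lad_cofinal {o : Ordinal.{u}} (ho : o ≠ 0) {β : Ordinal} (hβ : β < o) :
    ∃ i < o.cof.ord, β ≤ lad o i := by
  rw [lad, dif_pos ho]
  exact (Classical.choose_spec (exists_lad o ho)).2 β hβ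

/-- block index of an element (used in the no-max case) -/
def bIdx (σ : Ordinal.{u}) (x : X) : Ordinal.{u} :=
  sInf {i | j r x ≤ lad σ i}

lemma bIdx_spec {σ : Ordinal.{u}} {x : X} (h : j r x < σ) :
    j r x ≤ lad σ (bIdx r σ x) ∧ bIdx r σ x < σ.cof.ord := by
  have hσ : σ ≠ 0 := fun h0 => by simp [h0] at h
  obtain ⟨i, hi, hle⟩ := lad_cofinal hσ h
  have hne : {i | j r x ≤ lad σ i}.Nonempty := ⟨i, hle⟩
  exact ⟨csInf_mem hne, lt_of_le_of_lt (csInf_le' hle) hi⟩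

/-- the children function -/
def childF (s : Set X) (i : Ordinal.{u}) : Set X :=
  if s = ∅ then ∅
  else if sig r s ∈ j r '' s then (if i = 0 then {x ∈ s | j r x ≠ sig r s} else ∅)
  else {x ∈ s | bIdx r (sig r s) x = i}

lemma childF_empty (i : Ordinal) : childF r (∅ : Set X) i = ∅ := by
  rw [childF, if_pos rfl]

lemma childF_subset (s : Set X) (i : Ordinal) : childF r s i ⊆ s := by
  rw [childF]
  split
  · simp
  · split
    · split
      · exact sep_subset _ _
      · simp
    · exact sep_subset _ _

lemma childF_disjoint (s : Set X) {i i' : Ordinal} (h : i ≠ i') :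
    childF r s i ∩ childF r s i' = ∅ := by
  rw [childF, childF]
  split
  · simp
  · split
    · rcases eq_or_ne i 0 with rfl | hi
      · rw [if_pos rfl, if_neg (Ne.symm h)]; simp
      · rw [if_neg hi]; simp
    · ext x
      simp only [mem_inter_iff, mem_sep_iff, mem_empty_iff_false, iff_false]
      rintro ⟨⟨_, h1⟩, ⟨_, h2⟩⟩
      exact h (h1 ▸ h2 ▸ rfl)

/-- children have strictly smaller strict-sup -/
lemma childF_ssup_lt {s : Set X} (hs : s ≠ ∅) (i : Ordinal) :
    ssup r (childF r s i) < ssup r s := by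
  rcases eq_empty_or_nonempty (childF r s i) with he | hne
  · rw [he, ssup_empty]
    exact ssup_pos r (nonempty_iff_ne_empty.2 hs)
  rw [childF, if_neg hs]
  rw [childF, if_neg hs] at hne
  by_cases hm : sig r s ∈ j r '' s
  · rw [if_pos hm] at hne ⊢
    obtain ⟨m, hm1, hm2⟩ := hm
    rcases eq_or_ne i 0 with rfl | hi
    · rw [if_pos rfl] at hne ⊢
      exact ssup_max_child_lt r hm1 hm2
    · rw [if_neg hi] at hne
      exact absurd rfl hne.ne_empty.elim
  · rw [if_neg hm] at hne ⊢
    have hσ0 : sig r s ≠ 0 := (sig_pos r hs hm).ne'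
    have hlim : ∀ a < sig r s, a + 1 < sig r s := fun a ha => sig_lim_step r hs hm ha
    have hbound : ∀ x ∈ {x ∈ s | bIdx r (sig r s) x = i}, j r x + 1 ≤ lad (sig r s) i + 1 := by
      rintro x ⟨hxs, hxi⟩
      have := (bIdx_spec r (j_lt_sig r hm hxs)).1
      rw [hxi] at this
      exact add_le_add_left this 1
    rw [ssup_eq_sig r hs hm]
    exact lt_of_le_of_lt (ssup_le r hne hbound) (hlim _ (lad_lt hσ0 i))

/-- the labelled-forest invariant -/
def rootLabel (s : Set X) : Option (Bool × Ordinal.{u}) :=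
  if s = ∅ then none
  else some (if sig r s ∈ j r '' s then true else false, otp r s)

def FF (s : Set X) : List Ordinal.{u} → Option (Bool × Ordinal.{u}) :=
  fun addr => rootLabel r (addr.foldl (childF r) s)

lemma FF_nil (s : Set X) : FF r s [] = rootLabel r s := rfl

lemma FF_cons (s : Set X) (i : Ordinal) (a : List Ordinal) :
    FF r s (i :: a) = FF r (childF r s i) a := rfl

lemma FF_child (s t : Set X) (h : FF r s = FF r t) (i : Ordinal) :
    FF r (childF r s i) = FF r (childF r t i) := by
  funext a
  rw [← FF_cons, ← FF_cons, h]

lemma bool_iff {P Q : Prop} [Decidable P] [Decidable Q]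
    (h : (if P then true else false) = (if Q then true else false)) : P ↔ Q := by
  by_cases hp : P <;> by_cases hq : Q <;> simp [hp, hq] at h ⊢

/-- main separation theorem: the invariant separates comparable sets -/
theorem sep : ∀ (t s : Set X), s ⊆ t → FF r s = FF r t → s = t := by
  suffices H : ∀ ρ : Ordinal.{u}, ∀ t s : Set X,
      ssup r t = ρ → s ⊆ t → FF r s = FF r t → s = t by
    exact fun t s h1 h2 => H (ssup r t) t s rfl h1 h2
  intro ρ
  induction ρ using Ordinal.induction with
  | h ρ IH =>
  intro t s hρ hst hF
  have h0 := congrFun hF []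
  rw [FF_nil, FF_nil, rootLabel, rootLabel] at h0
  by_cases ht : t = ∅
  · subst ht; exact subset_empty_iff.1 hst
  rw [if_neg ht] at h0
  by_cases hs : s = ∅
  · rw [if_pos hs] at h0; exact absurd h0 (by simp)
  rw [if_neg hs] at h0
  have hpair := Option.some_injective _ h0
  have hotp : otp r s = otp r t := congrArg Prod.snd hpair
  have hcase : (sig r s ∈ j r '' s) ↔ (sig r t ∈ j r '' t) :=
    bool_iff (congrArg Prod.fst hpair)
  have hsig : sig r s = sig r t :=
    sig_eq_of_otp r hst (nonempty_iff_ne_empty.2 hs) hotp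
  by_cases hm : sig r t ∈ j r '' t
  · -- max case
    obtain ⟨m, hmt, hjm⟩ := hm
    have hms : sig r s ∈ j r '' s := hcase.2 ⟨m, hmt, hjm⟩
    obtain ⟨m', hms', hjm'⟩ := hms
    have hmm : m' = m := j_inj r (by rw [hjm', hjm, hsig])
    subst hmm
    have hchs : childF r s 0 = {x ∈ s | j r x ≠ sig r s} := by
      rw [childF, if_neg hs, if_pos ⟨m', hms', hjm'⟩, if_pos rfl]
    have hcht : childF r t 0 = {x ∈ t | j r x ≠ sig r t} := by
      rw [childF, if_neg ht, if_pos ⟨m', hmt, hjm⟩, if_pos rfl]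
    have hsub : childF r s 0 ⊆ childF r t 0 := by
      rw [hchs, hcht, ← hsig]
      exact fun x hx => ⟨hst hx.1, hx.2⟩
    have hlt : ssup r (childF r t 0) < ρ := hρ ▸ childF_ssup_lt r ht 0
    have heq := IH _ hlt (childF r t 0) (childF r s 0) rfl hsub (FF_child r s t hF 0)
    ext x
    constructor
    · exact fun hx => hst hx
    · intro hx
      by_cases hxm : j r x = sig r t
      · have hxe : x = m' := j_inj r (by rw [hxm, ← hjm])
        rwa [hxe]
      · have : x ∈ childF r t 0 := hcht ▸ ⟨hx, hxm⟩
        rw [← heq, hchs] at this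
        exact this.1
  · -- no-max case
    have hms : sig r s ∉ j r '' s := fun h => hm (hcase.1 h)
    have hchs : ∀ i, childF r s i = {x ∈ s | bIdx r (sig r t) x = i} := by
      intro i; rw [childF, if_neg hs, if_neg hms, hsig]
    have hcht : ∀ i, childF r t i = {x ∈ t | bIdx r (sig r t) x = i} := by
      intro i; rw [childF, if_neg ht, if_neg hm]
    have heq : ∀ i, childF r s i = childF r t i := by
      intro i
      have hsub : childF r s i ⊆ childF r t i := by
        rw [hchs, hcht]; exact fun x hx => ⟨hst hx.1, hx.2⟩
      have hlt : ssup r (childF r t i) < ρ := hρ ▸ childF_ssup_lt r ht i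
      exact IH _ hlt (childF r t i) (childF r s i) rfl hsub (FF_child r s t hF i)
    ext x
    constructor
    · exact fun hx => hst hx
    · intro hx
      have hxlt : j r x < sig r t := j_lt_sig r hm hx
      have : x ∈ childF r t (bIdx r (sig r t) x) := (hcht _) ▸ ⟨hx, rfl⟩
      rw [← heq] at this
      exact childF_subset r s _ this

/-! ### Counting -/

lemma foldl_from_empty (a : List Ordinal.{u}) :
    a.foldl (childF r) ∅ = (∅ : Set X) := by
  induction a with
  | nil => rfl
  | cons i a ih => rw [List.foldl_cons, childF_empty]; exact ih

lemma iter_subset (s : Set X) (a : List Ordinal.{u}) : a.foldl (childF r) s ⊆ s := by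
  induction a generalizing s with
  | nil => exact fun _ h => h
  | cons i a ih =>
    rw [List.foldl_cons]
    exact (ih (childF r s i)).trans (childF_subset r s i)

lemma iter_card_le (s : Set X) (a : List Ordinal.{u}) {ν : Cardinal.{u}} (h : #s ≤ ν) :
    #↥(a.foldl (childF r) s) ≤ ν :=
  le_trans (mk_le_mk_of_subset (iter_subset r s a)) h

/-- distinct addresses of the same length give disjoint iterated children -/
lemma iter_disjoint : ∀ (a b : List Ordinal.{u}) (_ : a.length = b.length) (_ : a ≠ b)
    (s : Set X), a.foldl (childF r) s ∩ b.foldl (childF r) s = ∅ := by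
  intro a
  induction a with
  | nil => intro b hl hne s; exact absurd (List.eq_nil_of_length_eq_zero hl.symm).symm hne
  | cons i a ih =>
    intro b hl hne s
    cases b with
    | nil => simp at hl
    | cons i' b =>
      rcases eq_or_ne i i' with rfl | hii
      · have hab : a ≠ b := fun h => hne (by rw [h])
        rw [List.foldl_cons, List.foldl_cons]
        exact ih b (by simpa using hl) hab (childF r s i)
      · rw [List.foldl_cons, List.foldl_cons]
        apply subset_empty_iff.1
        intro x hx
        rw [← childF_disjoint r s hii]
        exact ⟨iter_subset r _ a hx.1, iter_subset r _ b hx.2⟩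

lemma FF_ne_none_iff (s : Set X) (a : List Ordinal.{u}) :
    FF r s a ≠ none ↔ a.foldl (childF r) s ≠ ∅ := by
  rw [FF, rootLabel]
  split
  · simp_all
  · simp_all

variable {ν : Cardinal.{u}}

/-- all entries of a relevant address are small ordinals -/
lemma entries_lt (hν : ℵ₀ ≤ ν) :
    ∀ (a : List Ordinal.{u}) (s : Set X), #s ≤ ν → a.foldl (childF r) s ≠ ∅ →
      ∀ i ∈ a, i < (Order.succ ν).ord := by
  intro a
  induction a with
  | nil => intro s _ _ i hi; simp at hi
  | cons i0 a ih =>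
    intro s hs hne i hi
    rw [List.foldl_cons] at hne
    have hch : childF r s i0 ≠ ∅ := by
      intro h
      rw [h, foldl_from_empty] at hne
      exact hne rfl
    rcases List.mem_cons.1 hi with rfl | hia
    · -- head entry
      rw [childF] at hch
      by_cases hse : s = ∅
      · rw [if_pos hse] at hch; exact absurd rfl hch
      rw [if_neg hse] at hch
      by_cases hm : sig r s ∈ j r '' s
      · rw [if_pos hm] at hch
        by_cases hiz : i = 0
        · subst hiz
          rw [Cardinal.lt_ord]
          simpa using (lt_of_le_of_lt (zero_le ν) (Order.lt_succ ν))
        · rw [if_neg hiz] at hch; exact absurd rfl hch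
      · rw [if_neg hm] at hch
        obtain ⟨x, hxs, hxi⟩ := nonempty_iff_ne_empty.2 hch
        have hxlt : j r x < sig r s := j_lt_sig r hm hxs
        have h1 : bIdx r (sig r s) x < (sig r s).cof.ord := (bIdx_spec r hxlt).2
        rw [Cardinal.lt_ord] at h1 ⊢
        calc i.card = (bIdx r (sig r s) x).card := by rw [hxi]
          _ < (sig r s).cof := h1
          _ ≤ #s := cof_sig_le r hse hm
          _ < Order.succ ν := lt_of_le_of_lt hs (Order.lt_succ ν)
    · exact ih (childF r s i0) (le_trans (mk_le_mk_of_subset (childF_subset r s i0)) hs)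
        hne i hia

/-- labels of relevant addresses are small -/
lemma label_lt (hν : ℵ₀ ≤ ν) (a : List Ordinal.{u}) (s : Set X) (hs : #s ≤ ν)
    {b : Bool} {o : Ordinal.{u}} (h : FF r s a = some (b, o)) : o < (Order.succ ν).ord := by
  rw [FF, rootLabel] at h
  split at h
  · exact absurd h (by simp)
  · have ho : o = otp r (a.foldl (childF r) s) := (congrArg Prod.snd (Option.some_injective _ h)).symm
    rw [Cardinal.lt_ord, ho, otp, card_type]
    exact lt_of_le_of_lt (iter_card_le r s a hs) (Order.lt_succ ν)

/-- support of the invariant is small -/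
lemma supp_card (hν : ℵ₀ ≤ ν) (s : Set X) (hs : #s ≤ ν) :
    #{a : List Ordinal.{u} | FF r s a ≠ none} ≤ Cardinal.lift.{u+1} ν := by
  have wf : WellFounded r := IsWellFounded.wf
  have hmem : ∀ a : {a : List Ordinal.{u} | FF r s a ≠ none},
      (a.1.foldl (childF r) s).Nonempty :=
    fun a => nonempty_iff_ne_empty.2 ((FF_ne_none_iff r s a.1).1 a.2)
  have key : #{a : List Ordinal.{u} | FF r s a ≠ none} ≤ #(ULift.{u+1} (ℕ × ↥s)) := by
    apply mk_le_of_injective (f := fun a =>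
      ULift.up (a.1.length, ⟨wf.min _ (hmem a), iter_subset r s a.1 (wf.min_mem _ (hmem a))⟩))
    intro a b hab
    have h1 : a.1.length = b.1.length := congrArg (fun z => z.down.1) hab
    have h2 : wf.min _ (hmem a) = wf.min _ (hmem b) :=
      congrArg (fun z => (z.down.2 : X)) hab
    by_contra hne
    have hne' : a.1 ≠ b.1 := fun h => hne (Subtype.ext h)
    have hdisj := iter_disjoint r a.1 b.1 h1 hne' s
    have : wf.min _ (hmem a) ∈ (∅ : Set X) := by
      rw [← hdisj]
      exact ⟨wf.min_mem _ (hmem a), h2 ▸ wf.min_mem _ (hmem b)⟩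
    exact this
  refine le_trans key ?_
  have hps : #(ℕ × ↥s) ≤ ν := by
    rw [mk_prod, Cardinal.lift_uzero, mk_denumerable, Cardinal.lift_aleph0]
    calc ℵ₀ * #s ≤ ν * ν := mul_le_mul' hν hs
      _ = ν := mul_eq_self hν
  rw [mk_uLift]
  exact Cardinal.lift_le.2 hps

def TT (ν : Cardinal.{u}) : Type (u+1) :=
  List (↥(Iio ((Order.succ ν).ord))) × (Bool × ↥(Iio ((Order.succ ν).ord)))

def enc (ν : Cardinal.{u}) (v : List Ordinal.{u} → Option (Bool × Ordinal.{u})) :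
    Set (TT ν) :=
  {p | v (p.1.map Subtype.val) = some (p.2.1, (p.2.2 : Ordinal))}

lemma pmap_map_val {θ : Ordinal.{u}} (a : List Ordinal.{u}) (H : ∀ i ∈ a, i < θ) :
    (a.pmap (fun i h => (⟨i, h⟩ : ↥(Iio θ))) H).map Subtype.val = a := by
  induction a with
  | nil => rfl
  | cons i a ih => exact congrArg (i :: ·) (ih _)

lemma enc_aux (hν : ℵ₀ ≤ ν) {s1 s2 : Set X} (h1 : #s1 ≤ ν) (h2 : #s2 ≤ ν)
    (he : enc ν (FF r s1) = enc ν (FF r s2)) {a : List Ordinal.{u}} {b : Bool}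
    {o : Ordinal.{u}} (hv : FF r s1 a = some (b, o)) : FF r s2 a = some (b, o) := by
  have hne : a.foldl (childF r) s1 ≠ ∅ :=
    (FF_ne_none_iff r s1 a).1 (by rw [hv]; simp)
  have hent : ∀ i ∈ a, i < (Order.succ ν).ord := entries_lt r hν a s1 h1 hne
  have ho : o < (Order.succ ν).ord := label_lt r hν a s1 h1 hv
  set a' : List (↥(Iio ((Order.succ ν).ord))) :=
    a.pmap (fun i h => (⟨i, h⟩ : ↥(Iio ((Order.succ ν).ord)))) hent with ha'
  have hmap : a'.map Subtype.val = a := pmap_map_val a hent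
  have hp : ((a', (b, ⟨o, ho⟩)) : TT ν) ∈ enc ν (FF r s1) := by
    show FF r s1 (a'.map Subtype.val) = some (b, o)
    rw [hmap]; exact hv
  rw [he] at hp
  have : FF r s2 (a'.map Subtype.val) = some (b, o) := hp
  rwa [hmap] at this

lemma enc_inj (hν : ℵ₀ ≤ ν) {s1 s2 : Set X} (h1 : #s1 ≤ ν) (h2 : #s2 ≤ ν)
    (he : enc ν (FF r s1) = enc ν (FF r s2)) : FF r s1 = FF r s2 := by
  funext a
  cases hv1 : FF r s1 a with
  | none =>
    cases hv2 : FF r s2 a with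
    | none => rfl
    | some l =>
      exfalso
      obtain ⟨b, o⟩ := l
      have := enc_aux r hν h2 h1 he.symm hv2
      rw [hv1] at this; exact absurd this (by simp)
  | some l =>
    obtain ⟨b, o⟩ := l
    exact (enc_aux r hν h1 h2 he hv1).symm

/-- the encoded invariant has a small graph -/
lemma enc_card (hν : ℵ₀ ≤ ν) (s : Set X) (hs : #s ≤ ν) :
    #(enc ν (FF r s)) ≤ Cardinal.lift.{u+1} ν := by
  refine le_trans ?_ (supp_card r hν s hs)
  apply mk_le_of_injective
    (f := fun p => (⟨p.1.1.map Subtype.val, by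
      have h : FF r s (p.1.1.map Subtype.val) = some (p.1.2.1, (p.1.2.2 : Ordinal)) := p.2
      rw [Set.mem_setOf_eq, h]; simp⟩ :
      {a : List Ordinal.{u} | FF r s a ≠ none}))
  intro p q hpq
  have hl : p.1.1.map Subtype.val = q.1.1.map Subtype.val := congrArg Subtype.val hpq
  have hll : p.1.1 = q.1.1 :=
    List.map_injective_iff.2 Subtype.val_injective hl
  have hp : FF r s (p.1.1.map Subtype.val) = some (p.1.2.1, (p.1.2.2 : Ordinal)) := p.2
  have hq : FF r s (q.1.1.map Subtype.val) = some (q.1.2.1, (q.1.2.2 : Ordinal)) := q.2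
  rw [hl, hq] at hp
  have h2 := Option.some_injective _ hp
  obtain ⟨hb, hov⟩ := Prod.ext_iff.1 h2
  simp only at hb hov
  apply Subtype.ext
  apply Prod.ext hll
  exact Prod.ext hb.symm (Subtype.ext hov).symm

/-- cardinality of the per-size class of invariants -/
lemma mk_class_le (hν : ℵ₀ ≤ ν) :
    #(FF r '' {s : Set X | #s ≤ ν}) ≤ Cardinal.lift.{u+1} (2 ^ ν) := by
  set c : Cardinal.{u+1} := Cardinal.lift.{u+1} (Order.succ ν) with hc
  have hA : #(↥(Iio ((Order.succ ν).ord))) = c := by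
    rw [Cardinal.mk_Iio_ordinal, card_ord]
  have hcinf : ℵ₀ ≤ c := by
    rw [hc, Cardinal.aleph0_le_lift]
    exact hν.trans (Order.le_succ ν)
  haveI : Infinite (↥(Iio ((Order.succ ν).ord))) :=
    Cardinal.infinite_iff.2 (by rw [hA]; exact hcinf)
  have hb : Cardinal.lift.{u+1, 0} #Bool ≤ c := by
    have h2 : Cardinal.lift.{u+1, 0} #Bool = 2 := by simp [mk_bool]
    rw [h2]
    exact le_trans (by exact_mod_cast (nat_lt_aleph0 2).le) hcinf
  have hTT : #(TT ν) ≤ c := by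
    simp only [TT, mk_prod, Cardinal.lift_id, Cardinal.lift_uzero, mk_list_eq_mk, hA]
    calc c * (Cardinal.lift.{u+1, 0} #Bool * c) ≤ c * (c * c) :=
          mul_le_mul' le_rfl (mul_le_mul' hb le_rfl)
      _ = c := by rw [mul_eq_self hcinf, mul_eq_self hcinf]
  have step1 : #(FF r '' {s : Set X | #s ≤ ν}) ≤
      #{S : Set (TT ν) // #S ≤ Cardinal.lift.{u+1} ν} := by
    apply mk_le_of_injective (f := fun v =>
      (⟨enc ν v.1, by
        obtain ⟨s, hs, hfs⟩ := v.2
        exact hfs ▸ enc_card r hν s hs⟩ : {S : Set (TT ν) // #S ≤ Cardinal.lift.{u+1} ν}))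
    intro v1 v2 h
    obtain ⟨s1, hs1, hf1⟩ := v1.2
    obtain ⟨s2, hs2, hf2⟩ := v2.2
    have he : enc ν v1.1 = enc ν v2.1 := congrArg Subtype.val h
    rw [← hf1, ← hf2] at he
    apply Subtype.ext
    rw [← hf1, ← hf2]
    exact enc_inj r hν hs1 hs2 he
  refine le_trans step1 ?_
  refine le_trans (mk_bounded_set_le _ _) ?_
  have hbase : max #(TT ν) ℵ₀ ≤ c := max_le hTT hcinf
  calc max #(TT ν) ℵ₀ ^ Cardinal.lift.{u+1} ν ≤ c ^ Cardinal.lift.{u+1} ν :=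
        power_le_power_right hbase
    _ = Cardinal.lift.{u+1} (Order.succ ν ^ ν) := by rw [hc, ← Cardinal.lift_power]
    _ ≤ Cardinal.lift.{u+1} (2 ^ ν) := by
        apply Cardinal.lift_le.2
        calc Order.succ ν ^ ν ≤ (2 ^ ν) ^ ν :=
              power_le_power_right (Order.succ_le_of_lt (Cardinal.cantor ν))
          _ = 2 ^ (ν * ν) := by rw [← power_mul]
          _ = 2 ^ ν := by rw [mul_eq_self hν]

lemma lam_le_powerlt (lam : Cardinal.{u}) : lam ≤ 2 ^< lam := by
  by_contra h
  push_neg at h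
  exact absurd (le_powerlt 2 h) (not_le.2 (Cardinal.cantor _))

lemma mk_range_FF_le (lam : Cardinal.{u}) (hlam : ℵ₀ < lam) :
    #(FF r '' {s : Set X | #s < lam}) ≤ Cardinal.lift.{u+1} (2 ^< lam) := by
  have h2inf : ℵ₀ ≤ 2 ^< lam := hlam.le.trans (lam_le_powerlt lam)
  haveI : Nonempty {ν : Cardinal.{u} // ν < lam} :=
    ⟨⟨0, lt_of_le_of_lt zero_le hlam⟩⟩
  have hsub : FF r '' {s : Set X | #s < lam} ⊆
      ⋃ ν : {ν : Cardinal.{u} // ν < lam}, FF r '' {s : Set X | #s ≤ ν.1 ⊔ ℵ₀} := by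
    rintro _ ⟨s, hs, rfl⟩
    exact mem_iUnion.2 ⟨⟨#s, hs⟩,
      mem_image_of_mem _ (show #↥s ≤ #↥s ⊔ ℵ₀ from le_sup_left)⟩
  refine le_trans (mk_le_mk_of_subset hsub) ?_
  refine le_trans (mk_iUnion_le _) ?_
  have hι : #{ν : Cardinal.{u} // ν < lam} ≤ Cardinal.lift.{u+1} lam := by
    have : #{ν : Cardinal.{u} // ν < lam} ≤ #(↥(Iio lam.ord)) := by
      apply mk_le_of_injective (f := fun ν =>
        (⟨ν.1.ord, Cardinal.ord_lt_ord.2 ν.2⟩ : ↥(Iio lam.ord)))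
      intro a b h
      exact Subtype.ext (Cardinal.ord_injective (congrArg Subtype.val h))
    rwa [Cardinal.mk_Iio_ordinal, card_ord] at this
  have hsup : ⨆ ν : {ν : Cardinal.{u} // ν < lam},
      #(FF r '' {s : Set X | #s ≤ ν.1 ⊔ ℵ₀}) ≤ Cardinal.lift.{u+1} (2 ^< lam) := by
    apply ciSup_le'
    intro ν
    have hν' : ℵ₀ ≤ ν.1 ⊔ ℵ₀ := le_sup_right
    have hlt : ν.1 ⊔ ℵ₀ < lam := max_lt ν.2 hlam
    exact le_trans (mk_class_le r hν') (Cardinal.lift_le.2 (le_powerlt 2 hlt))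
  calc #{ν : Cardinal.{u} // ν < lam} * ⨆ ν : {ν : Cardinal.{u} // ν < lam},
      #(FF r '' {s : Set X | #s ≤ ν.1 ⊔ ℵ₀})
      ≤ Cardinal.lift.{u+1} lam * Cardinal.lift.{u+1} (2 ^< lam) := mul_le_mul' hι hsup
    _ = Cardinal.lift.{u+1} (lam * (2 ^< lam)) := (Cardinal.lift_mul _ _).symm
    _ ≤ Cardinal.lift.{u+1} (2 ^< lam) := by
        apply Cardinal.lift_le.2
        calc lam * (2 ^< lam) ≤ (2 ^< lam) * (2 ^< lam) :=
              mul_le_mul' (lam_le_powerlt lam) le_rfl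
          _ = 2 ^< lam := mul_eq_self h2inf

end APf

open APf in
theorem package {X : Type u} (lam : Cardinal.{u}) {Z : Type (u+1)}
    (C : {s : Set X // #s < lam} → Z)
    (hcard : #(Set.range C) ≤ Cardinal.lift.{u+1} (2 ^< lam))
    (hsep : ∀ s t, C s = C t → s.1 ⊆ t.1 → s = t) :
    ∃ (I : Type u) (f : {s : Set X // #s < lam} → I),
      #I ≤ 2 ^< lam ∧ (∀ s t, f s = f t → s.1 ⊆ t.1 → s = t) ∧
      (∀ i : I, ¬ ∃ c : ℕ → {s : Set X // #s < lam},
        (∀ n, f (c n) = i) ∧ ∀ n, (c n).1 ⊂ (c (n+1)).1) := by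
  have hmk : #(Set.range C) ≤ #(ULift.{u+1} ((2 ^< lam).out)) := by
    rw [mk_uLift, mk_out]; exact hcard
  obtain ⟨e⟩ := (Cardinal.le_def _ _).1 hmk
  have hf : ∀ s t : {s : Set X // #s < lam},
      (e ⟨C s, Set.mem_range_self s⟩).down = (e ⟨C t, Set.mem_range_self t⟩).down →
      s.1 ⊆ t.1 → s = t := by
    intro s t h hsub
    have he : e ⟨C s, Set.mem_range_self s⟩ = e ⟨C t, Set.mem_range_self t⟩ :=
      ULift.down_injective h
    exact hsep s t (congrArg Subtype.val (e.injective he)) hsub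
  refine ⟨(2 ^< lam).out, fun s => (e ⟨C s, Set.mem_range_self s⟩).down, ?_, hf, ?_⟩
  · rw [mk_out]
  · rintro i ⟨c, hc, hss⟩
    have h01 := hf (c 0) (c 1) ((hc 0).trans (hc 1).symm) (hss 0).subset
    exact (hss 0).ne (congrArg Subtype.val h01)

/-- The poset `[κ]^{<λ}` of subsets of `κ` of cardinality `< λ`, ordered by `⊆`,
can be partitioned into at most `2^{<λ}` antichains; in particular it is
`2^{<λ}`-Noetherian. -/
theorem stmt1 (κ lam : Cardinal.{u}) :
    ∃ (I : Type u) (f : {s : Set (Quotient.out κ) // Cardinal.mk ↥s < lam} → I),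
      Cardinal.mk I ≤ 2 ^< lam ∧
      (∀ s t, f s = f t → s.1 ⊆ t.1 → s = t) ∧
      (∀ i : I, ¬ ∃ c : ℕ → {s : Set (Quotient.out κ) // Cardinal.mk ↥s < lam},
        (∀ n, f (c n) = i) ∧ ∀ n, (c n).1 ⊂ (c (n+1)).1) := by
  classical
  set X : Type u := Quotient.out κ with hX
  by_cases hlam : ℵ₀ < lam
  · -- main case: the labelled-forest invariant
    let r : X → X → Prop := WellOrderingRel
    haveI : IsWellOrder X r := WellOrderingRel.isWellOrder
    refine package lam (fun s => APf.FF r s.1) ?_ ?_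
    · have hrange : Set.range (fun s : {s : Set X // #s < lam} => APf.FF r s.1) ⊆
          APf.FF r '' {s : Set X | #s < lam} := by
        rintro _ ⟨s, rfl⟩
        exact ⟨s.1, s.2, rfl⟩
      exact (mk_le_mk_of_subset hrange).trans (APf.mk_range_FF_le r lam hlam)
    · intro s t h hsub
      exact Subtype.ext (APf.sep r t.1 s.1 hsub h)
  · -- small case: colour by cardinality
    push_neg at hlam
    refine package lam (fun s => (⟨(#s.1).ord, Cardinal.ord_lt_ord.2 s.2⟩ :
      ↥(Set.Iio lam.ord))) ?_ ?_
    · have h1 : #(Set.range (fun s : {s : Set X // #s < lam} =>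
          (⟨(#s.1).ord, Cardinal.ord_lt_ord.2 s.2⟩ : ↥(Set.Iio lam.ord)))) ≤
          #(↥(Set.Iio lam.ord)) := mk_set_le _
      refine le_trans h1 ?_
      rw [Cardinal.mk_Iio_ordinal, card_ord]
      exact Cardinal.lift_le.2 (APf.lam_le_powerlt lam)
    · intro s t h hsub
      have hord : (#s.1).ord = (#t.1).ord := congrArg Subtype.val h
      have hmk : #s.1 = #t.1 := Cardinal.ord_injective hord
      have htfin : t.1.Finite := Cardinal.lt_aleph0_iff_set_finite.1 (t.2.trans_le hlam)
      have hncard : t.1.ncard ≤ s.1.ncard := by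
        rw [← Nat.card_coe_set_eq, ← Nat.card_coe_set_eq]
        exact le_of_eq (congrArg Cardinal.toNat hmk.symm)
      exact Subtype.ext (Set.eq_of_subset_of_ncard_le hsub hncard htfin)
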